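/- Let m ≥ 2, (μ_i), (ν_i) positive for 1 ≤ i ≤ m−1. If there exists A > 0 such that Σ_{i=1}^{m−1} μ_i f_i² ≤ A·Σ_{i=1}^{m−1} ν_i (f_{i+1}−f_i)² for all sequences f with f_m = 0, then A ≥ sup_{k ≤ m−1} (Σ_{i=1}^{k} μ_i)·(Σ_{j=k}^{m−1} 1/ν_j). -/

import Mathlib

/-- Finite discrete Hardy-type inequality (necessity, Theorem 2.13). -/
theorem finite_hardy_necessary (m : ℕ) (hm : 2 ≤ m) (μ ν : ℕ → ℝ) (A : ℝ)
    (hμ : ∀ i ∈ Finset.Icc 1 (m - 1), 0 < μ i)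
    (hν : ∀ i ∈ Finset.Icc 1 (m - 1), 0 < ν i)
    (hA : 0 < A)
    (hineq : ∀ f : ℕ → ℝ, f m = 0 →
      ∑ i ∈ Finset.Icc 1 (m - 1), μ i * f i ^ 2
        ≤ A * ∑ i ∈ Finset.Icc 1 (m - 1), ν i * (f (i + 1) - f i) ^ 2) :
    ∀ k ∈ Finset.Icc 1 (m - 1),
      (∑ i ∈ Finset.Icc 1 k, μ i) * (∑ j ∈ Finset.Icc k (m - 1), 1 / ν j) ≤ A := by
  intro k hk
  rw [Finset.mem_Icc] at hk
  obtain ⟨hk1, hk2⟩ := hk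
  set σ : ℕ → ℝ := fun j => ∑ t ∈ Finset.Icc j (m - 1), 1 / ν t with hσ
  set f : ℕ → ℝ := fun i => σ (max i k) with hf
  have hσpos : 0 < σ k := by
    apply Finset.sum_pos
    · intro t ht
      rw [Finset.mem_Icc] at ht
      exact one_div_pos.mpr (hν t (Finset.mem_Icc.mpr ⟨hk1.trans ht.1, ht.2⟩))
    · exact ⟨k, Finset.mem_Icc.mpr ⟨le_refl k, hk2⟩⟩
  have hfm : f m = 0 := by
    have h1 : max m k = m := max_eq_left (hk2.trans (Nat.sub_le m 1))
    have h2 : Finset.Icc m (m - 1) = ∅ :=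
      Finset.Icc_eq_empty_of_lt (Nat.sub_lt (by omega) one_pos)
    simp [hf, hσ, h1, h2]
  have hstep : ∀ i, k ≤ i → i ≤ m - 1 → σ i = 1 / ν i + σ (i + 1) := by
    intro i hki him
    have hmem : i ∉ Finset.Ioc i (m - 1) := by simp
    have : Finset.Icc i (m - 1) = insert i (Finset.Icc (i + 1) (m - 1)) := by
      rw [Finset.Icc_add_one_left_eq_Ioc, Finset.Ioc_insert_left him]
    rw [hσ]
    simp only
    rw [this, Finset.sum_insert (by rw [Finset.Icc_add_one_left_eq_Ioc]; exact hmem)]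
  have hRHS : ∑ i ∈ Finset.Icc 1 (m - 1), ν i * (f (i + 1) - f i) ^ 2 = σ k := by
    have hsub : Finset.Icc k (m - 1) ⊆ Finset.Icc 1 (m - 1) :=
      Finset.Icc_subset_Icc hk1 le_rfl
    have hzero : ∀ x ∈ Finset.Icc 1 (m - 1), x ∉ Finset.Icc k (m - 1) →
        ν x * (f (x + 1) - f x) ^ 2 = 0 := by
      intro x hx hxn
      rw [Finset.mem_Icc] at hx
      have hxk : x < k := by
        by_contra h
        exact hxn (Finset.mem_Icc.mpr ⟨le_of_not_gt h, hx.2⟩)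
      have h1 : max x k = k := max_eq_right hxk.le
      have h2 : max (x + 1) k = k := max_eq_right hxk
      simp [hf, h1, h2]
    rw [← Finset.sum_subset hsub hzero]
    rw [show σ k = ∑ t ∈ Finset.Icc k (m - 1), 1 / ν t from rfl]
    apply Finset.sum_congr rfl
    intro i hi
    rw [Finset.mem_Icc] at hi
    have h1 : max i k = i := max_eq_left hi.1
    have h2 : max (i + 1) k = i + 1 := max_eq_left (hi.1.trans (Nat.le_succ i))
    have hνi : 0 < ν i := hν i (Finset.mem_Icc.mpr ⟨hk1.trans hi.1, hi.2⟩)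
    have : f (i + 1) - f i = -(1 / ν i) := by
      simp only [hf, h1, h2]
      rw [hstep i hi.1 hi.2]
      ring
    rw [this]
    field_simp
  have hLHS : (∑ i ∈ Finset.Icc 1 k, μ i) * σ k ^ 2
      ≤ ∑ i ∈ Finset.Icc 1 (m - 1), μ i * f i ^ 2 := by
    have heq : (∑ i ∈ Finset.Icc 1 k, μ i) * σ k ^ 2
        = ∑ i ∈ Finset.Icc 1 k, μ i * f i ^ 2 := by
      rw [Finset.sum_mul]
      apply Finset.sum_congr rfl
      intro i hi
      rw [Finset.mem_Icc] at hi
      have : max i k = k := max_eq_right hi.2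
      simp [hf, this]
    rw [heq]
    apply Finset.sum_le_sum_of_subset_of_nonneg (Finset.Icc_subset_Icc le_rfl hk2)
    intro i hi _
    exact mul_nonneg (hμ i hi).le (sq_nonneg _)
  have key := hineq f hfm
  rw [hRHS] at key
  have h2 : (∑ i ∈ Finset.Icc 1 k, μ i) * σ k ^ 2 ≤ A * σ k := hLHS.trans key
  nlinarith [hσpos, h2]
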